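/- arXiv:1311.0400 — 2 statements merged into one kernel-verified Lean document; each statement's English description precedes it below -/
import Mathlib

section
/- Let d ≥ 1 and 0 < α < d, and let f be a Schwartz function on ℝ^d. Then there exist constants C, R > 0 such that |I_α f(x)| ≤ C ‖x‖^{α−d} for all x with ‖x‖ ≥ R; that is, I_α f(x) = O(‖x‖^{α−d}) as ‖x‖ → ∞. (This is the claim of Remark 3.1 of the paper in the classical case k ≡ 0.) -/
open MeasureTheory Set

open Metric ENNReal

noncomputable section

/-- The classical Riesz potential `I_α f` on `ℝ^d`:
`I_α f(x) = (2^{d/2−α} Γ((d−α)/2)/Γ(α/2)) ∫ f(y) ‖x−y‖^{α−d} dy`. -/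
def rieszPotential (d : ℕ) (α : ℝ) (f : EuclideanSpace ℝ (Fin d) → ℝ)
    (x : EuclideanSpace ℝ (Fin d)) : ℝ :=
  ((2 : ℝ) ^ ((d : ℝ) / 2 - α) * Real.Gamma (((d : ℝ) - α) / 2) / Real.Gamma (α / 2)) *
    ∫ y, f y * ‖x - y‖ ^ (α - (d : ℝ))


lemma kernel_ball_bound (d : ℕ) (hd : 1 ≤ d) (α : ℝ) (hα : 0 < α) (hαd : α < d) :
    ∃ K : ℝ≥0∞, K ≠ ∞ ∧ ∀ r : ℝ, 0 < r →
      ∫⁻ z in Metric.ball (0 : EuclideanSpace ℝ (Fin d)) r,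
        ENNReal.ofReal (‖z‖ ^ (α - (d : ℝ))) ≤ ENNReal.ofReal (r ^ α) * K := by
  set E := EuclideanSpace ℝ (Fin d)
  haveI : Nonempty (Fin d) := ⟨⟨0, hd⟩⟩
  set B := volume (Metric.ball (0 : E) 1) with hBdef
  have hB : B ≠ ∞ := measure_ball_lt_top.ne
  set a : ℝ := (1 / 2 : ℝ) with hadef
  have ha : 0 < a := by norm_num
  have ha1 : a < 1 := by norm_num
  have hq1 : a ^ α < 1 := Real.rpow_lt_one ha.le ha1 hα
  set q : ℝ≥0∞ := ENNReal.ofReal (a ^ α) with hqdef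
  have hqlt : q < 1 := by
    rw [hqdef, ← ENNReal.ofReal_one]
    exact ENNReal.ofReal_lt_ofReal_iff_of_nonneg (Real.rpow_nonneg ha.le _) |>.mpr hq1
  refine ⟨ENNReal.ofReal (a ^ (α - (d : ℝ))) * B * (1 - q)⁻¹, ?_, ?_⟩
  · refine ENNReal.mul_ne_top (ENNReal.mul_ne_top ENNReal.ofReal_ne_top hB) ?_
    simp only [ne_eq, ENNReal.inv_eq_top, tsub_eq_zero_iff_le, not_le]
    exact hqlt
  intro r hr
  -- shells
  set S : ℕ → Set E := fun n => Metric.ball (0 : E) (r * a ^ n) \ Metric.ball 0 (r * a ^ (n + 1))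
    with hSdef
  have hcover : Metric.ball (0 : E) r \ {0} ⊆ ⋃ n, S n := by
    intro z hz
    have hz0 : 0 < ‖z‖ := by
      simp only [mem_diff, mem_singleton_iff] at hz
      exact norm_pos_iff.mpr hz.2
    have hzr : ‖z‖ < r := by
      have := hz.1
      simpa [Metric.mem_ball, dist_eq_norm] using this
    have hex : ∃ n : ℕ, r * a ^ (n + 1) ≤ ‖z‖ := by
      obtain ⟨n, hn⟩ := exists_pow_lt_of_lt_one (div_pos hz0 hr) ha1
      exact ⟨n, by
        have : a ^ (n + 1) ≤ a ^ n := pow_le_pow_of_le_one ha.le ha1.le (Nat.le_succ n)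
        have h2 : r * a ^ (n+1) ≤ r * a ^ n := by nlinarith
        nlinarith [(lt_div_iff₀ hr).mp hn]⟩
    classical
    set n := Nat.find hex with hn
    refine mem_iUnion.mpr ⟨n, ?_, ?_⟩
    · -- ‖z‖ < r * a ^ n
      rcases Nat.eq_zero_or_pos n with h0 | hpos
      · simp only [Metric.mem_ball, dist_eq_norm, dist_zero_right, sub_zero, h0, pow_zero, mul_one]
        exact hzr
      · obtain ⟨m, hm⟩ := Nat.exists_eq_succ_of_ne_zero hpos.ne'
        have := Nat.find_min hex (m := m) (by omega)
        push_neg at this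
        simp only [Metric.mem_ball, dist_eq_norm, dist_zero_right, sub_zero]
        calc ‖z‖ < r * a ^ (m + 1) := this
          _ = r * a ^ n := by rw [hm]
    · -- ¬ ‖z‖ < r * a ^ (n+1)
      have := Nat.find_spec hex
      simp only [Metric.mem_ball, dist_eq_norm, dist_zero_right, sub_zero, not_lt]
      exact this
  have hnull : Metric.ball (0 : E) r =ᵐ[volume] Metric.ball (0 : E) r \ ({0} : Set E) := by
    refine (MeasureTheory.diff_ae_eq_self.mpr ?_).symm
    exact measure_mono_null inter_subset_right (measure_singleton 0)
  calc
    ∫⁻ z in Metric.ball (0 : E) r, ENNReal.ofReal (‖z‖ ^ (α - (d : ℝ)))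
        = ∫⁻ z in Metric.ball (0 : E) r \ {0}, ENNReal.ofReal (‖z‖ ^ (α - (d : ℝ))) :=
      setLIntegral_congr hnull
    _ ≤ ∫⁻ z in ⋃ n, S n, ENNReal.ofReal (‖z‖ ^ (α - (d : ℝ))) :=
      lintegral_mono_set hcover
    _ ≤ ∑' n, ∫⁻ z in S n, ENNReal.ofReal (‖z‖ ^ (α - (d : ℝ))) :=
      lintegral_iUnion_le _ _
    _ ≤ ∑' n, ENNReal.ofReal ((r * a ^ (n + 1)) ^ (α - (d : ℝ))) *
          (ENNReal.ofReal ((r * a ^ n) ^ d) * B) := by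
      refine ENNReal.tsum_le_tsum fun n => ?_
      have hmeas : MeasurableSet (S n) := measurableSet_ball.diff measurableSet_ball
      have hbound : ∀ z ∈ S n,
          ENNReal.ofReal (‖z‖ ^ (α - (d : ℝ))) ≤
            ENNReal.ofReal ((r * a ^ (n + 1)) ^ (α - (d : ℝ))) := by
        intro z hz
        refine ENNReal.ofReal_le_ofReal ?_
        have h1 : r * a ^ (n + 1) ≤ ‖z‖ := by
          have := hz.2
          simpa [Metric.mem_ball, dist_eq_norm, not_lt] using this
        exact Real.rpow_le_rpow_of_nonpos (by positivity) h1 (by linarith)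
      calc
        ∫⁻ z in S n, ENNReal.ofReal (‖z‖ ^ (α - (d : ℝ)))
            ≤ ∫⁻ _ in S n, ENNReal.ofReal ((r * a ^ (n + 1)) ^ (α - (d : ℝ))) :=
          setLIntegral_mono' hmeas hbound
        _ = ENNReal.ofReal ((r * a ^ (n + 1)) ^ (α - (d : ℝ))) * volume (S n) :=
          setLIntegral_const _ _
        _ ≤ ENNReal.ofReal ((r * a ^ (n + 1)) ^ (α - (d : ℝ))) *
              (ENNReal.ofReal ((r * a ^ n) ^ d) * B) := by
          refine mul_le_mul_right ?_ _
          have : volume (Metric.ball (0 : E) (r * a ^ n)) =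
              ENNReal.ofReal ((r * a ^ n) ^ Module.finrank ℝ E) * B := by
            rw [hBdef]
            exact Measure.addHaar_ball_of_pos volume 0 (by positivity)
          calc volume (S n) ≤ volume (Metric.ball (0 : E) (r * a ^ n)) :=
                measure_mono diff_subset
            _ = ENNReal.ofReal ((r * a ^ n) ^ d) * B := by
                rw [this, finrank_euclideanSpace_fin]
    _ = ∑' n, ENNReal.ofReal (r ^ α) * (ENNReal.ofReal (a ^ (α - (d : ℝ))) * B) * q ^ n := by
      congr 1
      funext n
      have hkey : (r * a ^ (n + 1)) ^ (α - (d : ℝ)) * (r * a ^ n) ^ d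
          = r ^ α * a ^ (α - (d : ℝ)) * (a ^ α) ^ n := by
        have e1 : ((r * a ^ (n + 1)) ^ (α - (d : ℝ)) : ℝ)
            = r ^ (α - (d : ℝ)) * a ^ (((n : ℝ) + 1) * (α - (d : ℝ))) := by
          rw [Real.mul_rpow hr.le (pow_nonneg ha.le _), ← Real.rpow_natCast a (n + 1),
            ← Real.rpow_mul ha.le]
          push_cast
          ring_nf
        have e2 : ((r * a ^ n) ^ d : ℝ) = r ^ (d : ℝ) * a ^ ((n : ℝ) * (d : ℝ)) := by
          rw [mul_pow, ← Real.rpow_natCast r d, ← Real.rpow_natCast (a ^ n) d,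
            ← Real.rpow_natCast a n, ← Real.rpow_mul ha.le]
        rw [e1, e2]
        have e3 : r ^ (α - (d : ℝ)) * r ^ (d : ℝ) = r ^ α := by
          rw [← Real.rpow_add hr]; ring_nf
        have e4 : a ^ (((n : ℝ) + 1) * (α - (d : ℝ))) * a ^ ((n : ℝ) * (d : ℝ))
            = a ^ (α - (d : ℝ)) * (a ^ α) ^ n := by
          rw [← Real.rpow_add ha, ← Real.rpow_natCast (a ^ α) n, ← Real.rpow_mul ha.le,
            ← Real.rpow_add ha]
          ring_nf
        calc r ^ (α - (d : ℝ)) * a ^ (((n : ℝ) + 1) * (α - (d : ℝ)))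
              * (r ^ (d : ℝ) * a ^ ((n : ℝ) * (d : ℝ)))
            = (r ^ (α - (d : ℝ)) * r ^ (d : ℝ))
              * (a ^ (((n : ℝ) + 1) * (α - (d : ℝ))) * a ^ ((n : ℝ) * (d : ℝ))) := by ring
          _ = r ^ α * (a ^ (α - (d : ℝ)) * (a ^ α) ^ n) := by rw [e3, e4]
          _ = _ := by ring
      rw [← mul_assoc, ← ENNReal.ofReal_mul (by positivity), hkey]
      rw [hqdef, ← ENNReal.ofReal_pow (by positivity),
        ENNReal.ofReal_mul (by positivity), ENNReal.ofReal_mul (by positivity)]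
      ring
    _ = ENNReal.ofReal (r ^ α) * (ENNReal.ofReal (a ^ (α - (d : ℝ))) * B) * (1 - q)⁻¹ := by
      rw [ENNReal.tsum_mul_left, ENNReal.tsum_geometric]
    _ = ENNReal.ofReal (r ^ α) * (ENNReal.ofReal (a ^ (α - (d : ℝ))) * B * (1 - q)⁻¹) := by
      ring

theorem stmt_2 (d : ℕ) (hd : 1 ≤ d) (α : ℝ) (hα : 0 < α) (hαd : α < d)
    (f : SchwartzMap (EuclideanSpace ℝ (Fin d)) ℝ) :
    ∃ C R : ℝ, 0 < C ∧ 0 < R ∧ ∀ x : EuclideanSpace ℝ (Fin d), R ≤ ‖x‖ →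
      |rieszPotential d α (fun y => f y) x| ≤ C * ‖x‖ ^ (α - (d : ℝ)) := by
  set E := EuclideanSpace ℝ (Fin d)
  haveI : Nonempty (Fin d) := ⟨⟨0, hd⟩⟩
  set c : ℝ := (2 : ℝ) ^ ((d : ℝ) / 2 - α) * Real.Gamma (((d : ℝ) - α) / 2) / Real.Gamma (α / 2)
    with hcdef
  obtain ⟨Cd, hCdpos, hCd⟩ := f.decay d 0
  simp only [norm_iteratedFDeriv_zero] at hCd
  obtain ⟨K, hKtop, hKle⟩ := kernel_ball_bound d hd α hα hαd
  set k : ℝ := K.toReal with hkdef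
  have hk0 : 0 ≤ k := ENNReal.toReal_nonneg
  have hfint : Integrable (fun y : E => f y) volume := f.integrable
  have hMfin : ∫⁻ y, ‖f y‖₊ ∂volume ≠ ∞ := hfint.2.ne
  set M : ℝ := (∫⁻ y, ‖f y‖₊ ∂volume).toReal with hMdef
  have hM0 : 0 ≤ M := ENNReal.toReal_nonneg
  have hMeq : (∫⁻ y, (‖f y‖₊ : ℝ≥0∞) ∂volume) = ENNReal.ofReal M := by
    rw [hMdef, ENNReal.ofReal_toReal hMfin]
  refine ⟨|c| * ((Cd * k + M) * (2 : ℝ) ^ ((d : ℝ) - α)) + 1, 1, by positivity, one_pos, ?_⟩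
  intro x hx
  have hxpos : (0 : ℝ) < ‖x‖ := lt_of_lt_of_le one_pos hx
  set r : ℝ := ‖x‖ / 2 with hrdef
  have hr : 0 < r := by positivity
  -- measurability of the integrand
  have hgm : Measurable fun y : E => |f y| * ‖x - y‖ ^ (α - (d : ℝ)) := by
    refine (f.continuous.measurable.abs).mul ?_
    exact ((measurable_const.sub measurable_id).norm).pow measurable_const
  -- the main lintegral
  set g : E → ℝ≥0∞ := fun y => ENNReal.ofReal (|f y| * ‖x - y‖ ^ (α - (d : ℝ))) with hgdef
  -- part A : near x
  have hA : ∫⁻ y in Metric.ball x r, g y ≤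
      ENNReal.ofReal (Cd / r ^ d) * (ENNReal.ofReal (r ^ α) * K) := by
    have hstep1 : ∫⁻ y in Metric.ball x r, g y ≤
        ∫⁻ y in Metric.ball x r,
          ENNReal.ofReal (Cd / r ^ d) * ENNReal.ofReal (‖x - y‖ ^ (α - (d : ℝ))) := by
      refine setLIntegral_mono' measurableSet_ball fun y hy => ?_
      have hyn : r ≤ ‖y‖ := by
        have h1 : dist y x < r := hy
        have h2 : ‖x‖ - ‖y‖ ≤ ‖x - y‖ := norm_sub_norm_le x y
        have h3 : ‖x - y‖ = dist y x := by rw [dist_eq_norm, norm_sub_rev]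
        have : ‖x‖ = 2 * r := by rw [hrdef]; ring
        linarith
      have hfy : |f y| ≤ Cd / r ^ d := by
        have h1 : ‖y‖ ^ d * |f y| ≤ Cd := by simpa [Real.norm_eq_abs] using hCd y
        have h2 : r ^ d ≤ ‖y‖ ^ d := pow_le_pow_left₀ hr.le hyn d
        have h3 : (0 : ℝ) < r ^ d := by positivity
        rw [le_div_iff₀ h3]
        nlinarith [abs_nonneg (f y)]
      rw [hgdef, ← ENNReal.ofReal_mul (by positivity)]
      exact ENNReal.ofReal_le_ofReal
        (mul_le_mul_of_nonneg_right hfy (Real.rpow_nonneg (norm_nonneg _) _))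
    have hstep2 : ∫⁻ y in Metric.ball x r,
          ENNReal.ofReal (Cd / r ^ d) * ENNReal.ofReal (‖x - y‖ ^ (α - (d : ℝ)))
        = ENNReal.ofReal (Cd / r ^ d) *
          ∫⁻ y in Metric.ball x r, ENNReal.ofReal (‖x - y‖ ^ (α - (d : ℝ))) :=
      lintegral_const_mul' _ _ ENNReal.ofReal_ne_top
    -- translation
    have htrans : ∫⁻ y in Metric.ball x r, ENNReal.ofReal (‖x - y‖ ^ (α - (d : ℝ)))
        = ∫⁻ z in Metric.ball (0 : E) r, ENNReal.ofReal (‖z‖ ^ (α - (d : ℝ))) := by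
      set F : E → ℝ≥0∞ := fun z =>
        (Metric.ball (0 : E) r).indicator (fun z => ENNReal.ofReal (‖z‖ ^ (α - (d : ℝ)))) z
        with hFdef
      have hFm : Measurable F := by
        refine Measurable.indicator ?_ measurableSet_ball
        exact (measurable_norm.pow measurable_const).ennreal_ofReal
      have hind : ∀ y : E,
          (Metric.ball x r).indicator
            (fun y => ENNReal.ofReal (‖x - y‖ ^ (α - (d : ℝ)))) y = F (x - y) := by
        intro y
        have hmem : (y ∈ Metric.ball x r) = (x - y ∈ Metric.ball (0 : E) r) := by
          simp [Metric.mem_ball, dist_eq_norm_sub, norm_sub_rev x y]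
          exact iff_of_eq (congrArg (· < r) (dist_eq_norm_sub y x))
        rw [hFdef]
        beta_reduce
        by_cases h : y ∈ Metric.ball x r
        · rw [Set.indicator_of_mem h]
          have h' : x - y ∈ Metric.ball (0 : E) r := hmem ▸ h
          rw [Set.indicator_of_mem h']
        · rw [Set.indicator_of_notMem h]
          have h' : x - y ∉ Metric.ball (0 : E) r := hmem ▸ h
          rw [Set.indicator_of_notMem h']
      calc ∫⁻ y in Metric.ball x r, ENNReal.ofReal (‖x - y‖ ^ (α - (d : ℝ)))
          = ∫⁻ y, F (x - y) := by
            rw [← lintegral_indicator measurableSet_ball]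
            exact lintegral_congr hind
        _ = ∫⁻ y, F (x + y) := by
            have : ∀ y : E, F (x - y) = (fun z => F (x + z)) (-y) := by
              intro y; simp [sub_eq_add_neg]
            simp_rw [this]
            have hmap := MeasureTheory.lintegral_map_equiv (μ := (volume : Measure E))
              (fun z => F (x + z)) (MeasurableEquiv.neg E)
            have hcoe : ⇑(MeasurableEquiv.neg E) = (Neg.neg : E → E) := rfl
            rw [hcoe, Measure.map_neg_eq_self] at hmap
            exact hmap.symm
        _ = ∫⁻ z, F z := lintegral_add_left_eq_self F x
        _ = ∫⁻ z in Metric.ball (0 : E) r, ENNReal.ofReal (‖z‖ ^ (α - (d : ℝ))) := by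
            rw [hFdef, lintegral_indicator measurableSet_ball]
    calc ∫⁻ y in Metric.ball x r, g y
        ≤ ENNReal.ofReal (Cd / r ^ d) *
          ∫⁻ y in Metric.ball x r, ENNReal.ofReal (‖x - y‖ ^ (α - (d : ℝ))) := by
          rw [← hstep2]; exact hstep1
      _ = ENNReal.ofReal (Cd / r ^ d) *
          ∫⁻ z in Metric.ball (0 : E) r, ENNReal.ofReal (‖z‖ ^ (α - (d : ℝ))) := by
          rw [htrans]
      _ ≤ ENNReal.ofReal (Cd / r ^ d) * (ENNReal.ofReal (r ^ α) * K) :=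
          mul_le_mul_right (hKle r hr) _
  -- part B : away from x
  have hBpart : ∫⁻ y in (Metric.ball x r)ᶜ, g y ≤
      ENNReal.ofReal (r ^ (α - (d : ℝ))) * ENNReal.ofReal M := by
    have hstep1 : ∫⁻ y in (Metric.ball x r)ᶜ, g y ≤
        ∫⁻ y in (Metric.ball x r)ᶜ, ENNReal.ofReal (r ^ (α - (d : ℝ))) * (‖f y‖₊ : ℝ≥0∞) := by
      refine setLIntegral_mono' measurableSet_ball.compl fun y hy => ?_
      have hyn : r ≤ ‖x - y‖ := by
        have h1 : ¬ dist y x < r := hy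
        push_neg at h1
        rw [dist_eq_norm, norm_sub_rev] at h1
        exact h1
      have hker : ‖x - y‖ ^ (α - (d : ℝ)) ≤ r ^ (α - (d : ℝ)) :=
        Real.rpow_le_rpow_of_nonpos hr hyn (by linarith)
      have : |f y| * ‖x - y‖ ^ (α - (d : ℝ)) ≤ r ^ (α - (d : ℝ)) * |f y| := by
        nlinarith [abs_nonneg (f y), Real.rpow_nonneg (norm_nonneg (x - y)) (α - (d : ℝ))]
      rw [hgdef]
      calc ENNReal.ofReal (|f y| * ‖x - y‖ ^ (α - (d : ℝ)))
          ≤ ENNReal.ofReal (r ^ (α - (d : ℝ)) * |f y|) := ENNReal.ofReal_le_ofReal this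
        _ = ENNReal.ofReal (r ^ (α - (d : ℝ))) * (‖f y‖₊ : ℝ≥0∞) := by
            rw [ENNReal.ofReal_mul (Real.rpow_nonneg hr.le _)]
            congr 1
            rw [← Real.norm_eq_abs]; exact ofReal_norm _
    calc ∫⁻ y in (Metric.ball x r)ᶜ, g y
        ≤ ∫⁻ y in (Metric.ball x r)ᶜ, ENNReal.ofReal (r ^ (α - (d : ℝ))) * (‖f y‖₊ : ℝ≥0∞) :=
          hstep1
      _ ≤ ∫⁻ y, ENNReal.ofReal (r ^ (α - (d : ℝ))) * (‖f y‖₊ : ℝ≥0∞) :=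
          setLIntegral_le_lintegral _ _
      _ = ENNReal.ofReal (r ^ (α - (d : ℝ))) * ∫⁻ y, (‖f y‖₊ : ℝ≥0∞) :=
          lintegral_const_mul' _ _ ENNReal.ofReal_ne_top
      _ = ENNReal.ofReal (r ^ (α - (d : ℝ))) * ENNReal.ofReal M := by rw [hMeq]
  -- combine
  have hL : ∫⁻ y, g y ≤
      ENNReal.ofReal (Cd / r ^ d * (r ^ α * k) + r ^ (α - (d : ℝ)) * M) := by
    have hKr : K = ENNReal.ofReal k := by rw [hkdef, ENNReal.ofReal_toReal hKtop]
    calc ∫⁻ y, g y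
        = (∫⁻ y in Metric.ball x r, g y) + ∫⁻ y in (Metric.ball x r)ᶜ, g y :=
          (lintegral_add_compl _ measurableSet_ball).symm
      _ ≤ ENNReal.ofReal (Cd / r ^ d) * (ENNReal.ofReal (r ^ α) * K) +
          ENNReal.ofReal (r ^ (α - (d : ℝ))) * ENNReal.ofReal M := add_le_add hA hBpart
      _ = ENNReal.ofReal (Cd / r ^ d * (r ^ α * k) + r ^ (α - (d : ℝ)) * M) := by
          rw [hKr, ← ENNReal.ofReal_mul (by positivity), ← ENNReal.ofReal_mul (by positivity),
            ← ENNReal.ofReal_mul (Real.rpow_nonneg hr.le _),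
            ← ENNReal.ofReal_add (by positivity)
              (mul_nonneg (Real.rpow_nonneg hr.le _) hM0)]
  -- from lintegral to the integral
  have habs : |∫ y, f y * ‖x - y‖ ^ (α - (d : ℝ))| ≤
      Cd / r ^ d * (r ^ α * k) + r ^ (α - (d : ℝ)) * M := by
    have h1 : |∫ y, f y * ‖x - y‖ ^ (α - (d : ℝ))| ≤
        ∫ y, |f y * ‖x - y‖ ^ (α - (d : ℝ))| := by
      have := norm_integral_le_integral_norm (μ := (volume : Measure E))
        (fun y : E => f y * ‖x - y‖ ^ (α - (d : ℝ)))
      simpa only [Real.norm_eq_abs] using this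
    have heq : ∀ y : E, |f y * ‖x - y‖ ^ (α - (d : ℝ))| = |f y| * ‖x - y‖ ^ (α - (d : ℝ)) := by
      intro y
      rw [abs_mul, abs_of_nonneg (Real.rpow_nonneg (norm_nonneg _) _)]
    have h2 : ∫ y, |f y * ‖x - y‖ ^ (α - (d : ℝ))| = (∫⁻ y, g y).toReal := by
      simp_rw [heq]
      rw [integral_eq_lintegral_of_nonneg_ae]
      · exact Filter.Eventually.of_forall fun y => by positivity
      · exact hgm.aestronglyMeasurable
    have h3 : (∫⁻ y, g y).toReal ≤ Cd / r ^ d * (r ^ α * k) + r ^ (α - (d : ℝ)) * M := by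
      refine ENNReal.toReal_le_of_le_ofReal ?_ hL
      have : (0:ℝ) ≤ Cd / r ^ d * (r ^ α * k) := by positivity
      have h4 : (0:ℝ) ≤ r ^ (α - (d : ℝ)) * M :=
        mul_nonneg (Real.rpow_nonneg hr.le _) hM0
      linarith
    calc |∫ y, f y * ‖x - y‖ ^ (α - (d : ℝ))| ≤ ∫ y, |f y * ‖x - y‖ ^ (α - (d : ℝ))| := h1
      _ = (∫⁻ y, g y).toReal := h2
      _ ≤ _ := h3
  -- real arithmetic
  have harith : Cd / r ^ d * (r ^ α * k) + r ^ (α - (d : ℝ)) * M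
      = (Cd * k + M) * r ^ (α - (d : ℝ)) := by
    have h1 : Cd / r ^ d * r ^ α = Cd * r ^ (α - (d : ℝ)) := by
      rw [← Real.rpow_natCast r d, Real.rpow_sub hr]
      ring
    calc Cd / r ^ d * (r ^ α * k) + r ^ (α - (d : ℝ)) * M
        = (Cd / r ^ d * r ^ α) * k + r ^ (α - (d : ℝ)) * M := by ring
      _ = Cd * r ^ (α - (d : ℝ)) * k + r ^ (α - (d : ℝ)) * M := by rw [h1]
      _ = (Cd * k + M) * r ^ (α - (d : ℝ)) := by ring
  have hrx : r ^ (α - (d : ℝ)) = (2 : ℝ) ^ ((d : ℝ) - α) * ‖x‖ ^ (α - (d : ℝ)) := by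
    rw [hrdef, Real.div_rpow (norm_nonneg x) (by norm_num : (0:ℝ) ≤ 2), div_eq_mul_inv,
      ← Real.rpow_neg (by norm_num : (0:ℝ) ≤ 2), neg_sub]
    ring
  -- finish
  have hxz : (0 : ℝ) < ‖x‖ ^ (α - (d : ℝ)) := Real.rpow_pos_of_pos hxpos _
  have hfinal : |rieszPotential d α (fun y => f y) x| ≤
      |c| * ((Cd * k + M) * (2 : ℝ) ^ ((d : ℝ) - α)) * ‖x‖ ^ (α - (d : ℝ)) := by
    have : |rieszPotential d α (fun y => f y) x|
        = |c| * |∫ y, f y * ‖x - y‖ ^ (α - (d : ℝ))| := by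
      rw [rieszPotential, abs_mul, hcdef]
    rw [this]
    calc |c| * |∫ y, f y * ‖x - y‖ ^ (α - (d : ℝ))|
        ≤ |c| * ((Cd * k + M) * r ^ (α - (d : ℝ))) := by
          refine mul_le_mul_of_nonneg_left ?_ (abs_nonneg c)
          rw [← harith]; exact habs
      _ = |c| * ((Cd * k + M) * (2 : ℝ) ^ ((d : ℝ) - α)) * ‖x‖ ^ (α - (d : ℝ)) := by
          rw [hrx]; ring
  calc |rieszPotential d α (fun y => f y) x|
      ≤ |c| * ((Cd * k + M) * (2 : ℝ) ^ ((d : ℝ) - α)) * ‖x‖ ^ (α - (d : ℝ)) := hfinal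
    _ ≤ (|c| * ((Cd * k + M) * (2 : ℝ) ^ ((d : ℝ) - α)) + 1) * ‖x‖ ^ (α - (d : ℝ)) := by
        nlinarith [hxz]
end
end

section
/- Let d ≥ 1 and 0 < α < d, and let f(x) = e^{−‖x‖} for x ∈ ℝ^d. Then there exist constants C, R > 0 such that I_α f(x) ≤ C ‖x‖^{α−d} for all x with ‖x‖ ≥ R; that is, I_α f(x) = O(‖x‖^{α−d}) as ‖x‖ → ∞. (This is Example 3.1 of the paper in the classical case k ≡ 0.) -/
open MeasureTheory Set Metric
open scoped ENNReal NNReal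

noncomputable section

lemma aux_kernel_finite (d : ℕ) (hd : 1 ≤ d) {s : ℝ} (hs : -(d:ℝ) < s) (hs0 : s < 0) :
    ∫⁻ z : EuclideanSpace ℝ (Fin d) in ball 0 1, ENNReal.ofReal (‖z‖ ^ s) < ⊤ := by
  haveI : Nonempty (Fin d) := ⟨⟨0, hd⟩⟩
  haveI : Nontrivial (EuclideanSpace ℝ (Fin d)) := inferInstance
  set μ : Measure (EuclideanSpace ℝ (Fin d)) := volume with hμ
  have hmeas : AEMeasurable (fun z : EuclideanSpace ℝ (Fin d) => ‖z‖ ^ s)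
      (μ.restrict (ball 0 1)) :=
    (by fun_prop : Measurable (fun z : EuclideanSpace ℝ (Fin d) => ‖z‖ ^ s)).aemeasurable
  have key := lintegral_eq_lintegral_meas_lt (μ.restrict (ball 0 1))
    (Filter.Eventually.of_forall fun z => Real.rpow_nonneg (norm_nonneg z) s) hmeas
  rw [key]
  have V1lt : μ (ball (0:EuclideanSpace ℝ (Fin d)) 1) < ⊤ := measure_ball_lt_top
  have hbound : ∀ t : ℝ, 0 < t →
      (μ.restrict (ball 0 1)) {z : EuclideanSpace ℝ (Fin d) | t < ‖z‖ ^ s}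
        ≤ min (μ (ball 0 1)) (ENNReal.ofReal (t ^ ((d:ℝ)/s)) * μ (ball 0 1)) := by
    intro t ht
    refine le_min ?_ ?_
    · calc (μ.restrict (ball 0 1)) {z | t < ‖z‖ ^ s} ≤ (μ.restrict (ball 0 1)) univ :=
        measure_mono (subset_univ _)
      _ = μ (ball 0 1) := by rw [Measure.restrict_apply_univ]
    · have hsub : {z : EuclideanSpace ℝ (Fin d) | t < ‖z‖ ^ s} ⊆ ball 0 (t ^ s⁻¹) := by
        intro z hz
        simp only [mem_setOf_eq] at hz
        have hz0 : z ≠ 0 := by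
          rintro rfl
          rw [norm_zero, Real.zero_rpow (ne_of_lt hs0)] at hz; linarith
        have hzn : 0 < ‖z‖ := norm_pos_iff.mpr hz0
        have h2 : (‖z‖ ^ s) ^ s⁻¹ < t ^ s⁻¹ :=
          Real.rpow_lt_rpow_of_neg ht hz (inv_neg''.mpr hs0)
        rw [← Real.rpow_mul (norm_nonneg z), mul_inv_cancel₀ (ne_of_lt hs0),
          Real.rpow_one] at h2
        rwa [mem_ball_zero_iff]
      calc (μ.restrict (ball 0 1)) {z | t < ‖z‖ ^ s}
          ≤ μ {z | t < ‖z‖ ^ s} := Measure.restrict_le_self _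
        _ ≤ μ (ball 0 (t ^ s⁻¹)) := measure_mono hsub
        _ = ENNReal.ofReal ((t ^ s⁻¹) ^ Module.finrank ℝ (EuclideanSpace ℝ (Fin d))) *
              μ (ball 0 1) :=
            Measure.addHaar_ball μ 0 (Real.rpow_nonneg ht.le _)
        _ = ENNReal.ofReal (t ^ ((d:ℝ)/s)) * μ (ball 0 1) := by
            rw [finrank_euclideanSpace_fin, ← Real.rpow_natCast (t ^ s⁻¹) d,
              ← Real.rpow_mul ht.le, inv_mul_eq_div]
  calc ∫⁻ t in Ioi (0:ℝ), (μ.restrict (ball 0 1)) {a | t < ‖a‖ ^ s}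
      ≤ ∫⁻ t in Ioi (0:ℝ),
          min (μ (ball 0 1)) (ENNReal.ofReal (t ^ ((d:ℝ)/s)) * μ (ball 0 1)) := by
        refine setLIntegral_mono' measurableSet_Ioi fun t ht => hbound t ht
    _ ≤ (∫⁻ t in Ioc (0:ℝ) 1, min (μ (ball 0 1)) (ENNReal.ofReal (t ^ ((d:ℝ)/s)) * μ (ball 0 1)))
        + ∫⁻ t in Ioi (1:ℝ), min (μ (ball 0 1)) (ENNReal.ofReal (t ^ ((d:ℝ)/s)) * μ (ball 0 1)) := by
        rw [← lintegral_union measurableSet_Ioi (Ioc_disjoint_Ioi le_rfl),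
          Ioc_union_Ioi_eq_Ioi zero_le_one]
    _ < ⊤ := by
        apply ENNReal.add_lt_top.mpr
        constructor
        · calc ∫⁻ t in Ioc (0:ℝ) 1,
                min (μ (ball 0 1)) (ENNReal.ofReal (t ^ ((d:ℝ)/s)) * μ (ball 0 1))
              ≤ ∫⁻ _ in Ioc (0:ℝ) 1, μ (ball 0 1) := lintegral_mono fun t => min_le_left _ _
            _ = μ (ball 0 1) * volume (Ioc (0:ℝ) 1) := by rw [setLIntegral_const]
            _ < ⊤ := ENNReal.mul_lt_top V1lt (by simp [Real.volume_Ioc])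
        · have hds : (d:ℝ)/s < -1 := by
            rw [div_lt_iff_of_neg hs0]
            linarith
          have hint : IntegrableOn (fun t : ℝ => t ^ ((d:ℝ)/s)) (Ioi 1) :=
            integrableOn_Ioi_rpow_of_lt hds one_pos
          calc ∫⁻ t in Ioi (1:ℝ),
                min (μ (ball 0 1)) (ENNReal.ofReal (t ^ ((d:ℝ)/s)) * μ (ball 0 1))
              ≤ ∫⁻ t in Ioi (1:ℝ), ENNReal.ofReal (t ^ ((d:ℝ)/s)) * μ (ball 0 1) :=
                lintegral_mono fun t => min_le_right _ _
            _ = (∫⁻ t in Ioi (1:ℝ), ENNReal.ofReal (t ^ ((d:ℝ)/s))) * μ (ball 0 1) := by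
                rw [lintegral_mul_const]
                exact (by fun_prop : Measurable (fun t : ℝ => t ^ ((d:ℝ)/s))).ennreal_ofReal
            _ < ⊤ := ENNReal.mul_lt_top hint.lintegral_lt_top V1lt

lemma aux_one_add_pow_le (n : ℕ) (hn : 1 ≤ n) {a t : ℝ} (ha : 0 < a) (ha1 : a ≤ 1)
    (ht : 0 ≤ t) : (1 + t) ^ n ≤ ((n:ℝ)/a) ^ n * Real.exp (a * t) := by
  have hn0 : (0:ℝ) < n := by exact_mod_cast hn
  have h1 : 1 + t ≤ ((n:ℝ)/a) * Real.exp (a * t / n) := by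
    have h2 : a * t / n + 1 ≤ Real.exp (a * t / n) := Real.add_one_le_exp _
    have h3 : (a/n) * (1 + t) ≤ a * t / n + 1 := by
      have : a / n ≤ 1 := by
        rw [div_le_one hn0]
        calc a ≤ 1 := ha1
          _ ≤ (n:ℝ) := by exact_mod_cast hn
      have h4 : (a/n) * t = a * t / n := by ring
      nlinarith
    calc 1 + t = ((n:ℝ)/a) * ((a/n) * (1 + t)) := by
          field_simp
      _ ≤ ((n:ℝ)/a) * Real.exp (a * t / n) := by
          apply mul_le_mul_of_nonneg_left _ (by positivity)
          linarith
  calc (1 + t) ^ n ≤ (((n:ℝ)/a) * Real.exp (a * t / n)) ^ n := by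
        apply pow_le_pow_left₀ (by linarith) h1
    _ = ((n:ℝ)/a) ^ n * Real.exp (a * t / n) ^ n := mul_pow _ _ _
    _ = ((n:ℝ)/a) ^ n * Real.exp (a * t) := by
        rw [← Real.exp_nat_mul]
        congr 2
        field_simp

lemma aux_exp_le (n : ℕ) (hn : 1 ≤ n) {a t : ℝ} (ha : 0 < a) (ha1 : a ≤ 1) (ht : 0 ≤ t) :
    Real.exp (-(a * t)) ≤ ((n:ℝ)/a) ^ n * (1 + t) ^ (-(n:ℝ)) := by
  have h0 : (0:ℝ) < 1 + t := by linarith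
  have h1 := aux_one_add_pow_le n hn ha ha1 ht
  have hp : (0:ℝ) < (1 + t) ^ n := by positivity
  have key : (1 + t) ^ n / Real.exp (a * t) ≤ ((n:ℝ)/a) ^ n :=
    (div_le_iff₀ (Real.exp_pos _)).mpr h1
  rw [Real.exp_neg, Real.rpow_neg h0.le, Real.rpow_natCast, ← div_eq_mul_inv,
    le_div_iff₀ hp, inv_mul_eq_div, div_le_iff₀ (Real.exp_pos _)] at *
  nlinarith [Real.exp_pos (a * t)]

lemma aux_exp_finite (d : ℕ) (hd : 1 ≤ d) {a : ℝ} (ha : 0 < a) (ha1 : a ≤ 1) :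
    ∫⁻ y : EuclideanSpace ℝ (Fin d), ENNReal.ofReal (Real.exp (-(a * ‖y‖))) < ⊤ := by
  set n : ℕ := d + 1 with hn
  have hfin : (Module.finrank ℝ (EuclideanSpace ℝ (Fin d)) : ℝ) < (n:ℝ) := by
    rw [finrank_euclideanSpace_fin]
    exact_mod_cast Nat.lt_succ_self d
  have hJ := finite_integral_one_add_norm
    (E := EuclideanSpace ℝ (Fin d)) (μ := volume) hfin
  calc ∫⁻ y : EuclideanSpace ℝ (Fin d), ENNReal.ofReal (Real.exp (-(a * ‖y‖)))
      ≤ ∫⁻ y : EuclideanSpace ℝ (Fin d),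
          ENNReal.ofReal (((n:ℝ)/a) ^ n) * ENNReal.ofReal ((1 + ‖y‖) ^ (-(n:ℝ))) := by
        apply lintegral_mono fun y => ?_
        rw [← ENNReal.ofReal_mul (by positivity)]
        exact ENNReal.ofReal_le_ofReal
          (aux_exp_le n (Nat.le_add_left 1 d) ha ha1 (norm_nonneg y))
    _ = ENNReal.ofReal (((n:ℝ)/a) ^ n) *
          ∫⁻ y : EuclideanSpace ℝ (Fin d), ENNReal.ofReal ((1 + ‖y‖) ^ (-(n:ℝ))) :=
        lintegral_const_mul' _ _ ENNReal.ofReal_ne_top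
    _ < ⊤ := ENNReal.mul_lt_top ENNReal.ofReal_lt_top hJ

theorem stmt_3 (d : ℕ) (hd : 1 ≤ d) (α : ℝ) (hα : 0 < α) (hαd : α < d) :
    ∃ C R : ℝ, 0 < C ∧ 0 < R ∧ ∀ x : EuclideanSpace ℝ (Fin d), R ≤ ‖x‖ →
      rieszPotential d α (fun y => Real.exp (-‖y‖)) x ≤ C * ‖x‖ ^ (α - (d : ℝ)) := by
  have hs0 : α - (d:ℝ) < 0 := by linarith
  have hsd : -(d:ℝ) < α - (d:ℝ) := by linarith
  set s : ℝ := α - (d:ℝ) with hsdef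
  haveI : Nonempty (Fin d) := ⟨⟨0, hd⟩⟩
  set c : ℝ := (2 : ℝ) ^ ((d : ℝ) / 2 - α) * Real.Gamma (((d : ℝ) - α) / 2) /
    Real.Gamma (α / 2) with hcdef
  have hc0 : 0 < c := by
    apply div_pos
    · exact mul_pos (Real.rpow_pos_of_pos two_pos _)
        (Real.Gamma_pos_of_pos (by linarith))
    · exact Real.Gamma_pos_of_pos (by linarith)
  set E1 : ℝ≥0∞ := ∫⁻ y : EuclideanSpace ℝ (Fin d), ENNReal.ofReal (Real.exp (-‖y‖))
    with hE1def
  set E2 : ℝ≥0∞ := ∫⁻ y : EuclideanSpace ℝ (Fin d),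
    ENNReal.ofReal (Real.exp (-(2⁻¹ * ‖y‖))) with hE2def
  set B : ℝ≥0∞ := ∫⁻ z : EuclideanSpace ℝ (Fin d) in ball 0 1, ENNReal.ofReal (‖z‖ ^ s)
    with hBdef
  have hE1 : E1 < ⊤ := by
    have := aux_exp_finite d hd one_pos le_rfl
    simpa using this
  have hE2 : E2 < ⊤ :=
    aux_exp_finite d hd (by norm_num : (0:ℝ) < 2⁻¹) (by norm_num)
  have hB : B < ⊤ := aux_kernel_finite d hd hsd hs0
  set K : ℝ := 4 ^ d * (d.factorial : ℝ) with hKdef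
  have hKpos : 0 < K := by positivity
  set Q : ℝ≥0∞ := ENNReal.ofReal ((2:ℝ) ^ (-s)) * E1 + ENNReal.ofReal K * (B + E2)
    with hQdef
  have hQ : Q ≠ ⊤ := by
    apply ENNReal.add_lt_top.mpr ⟨?_, ?_⟩ |>.ne
    · exact ENNReal.mul_lt_top ENNReal.ofReal_lt_top hE1
    · exact ENNReal.mul_lt_top ENNReal.ofReal_lt_top (ENNReal.add_lt_top.mpr ⟨hB, hE2⟩)
  refine ⟨c * Q.toReal + 1, 1, ?_, one_pos, ?_⟩
  · have := mul_nonneg hc0.le (ENNReal.toReal_nonneg (a := Q))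
    linarith
  intro x hx
  have ht1 : (1:ℝ) ≤ ‖x‖ := hx
  have ht0 : (0:ℝ) < ‖x‖ := lt_of_lt_of_le one_pos ht1
  -- pointwise bound 1
  have hpt1 : ∀ y : EuclideanSpace ℝ (Fin d),
      ENNReal.ofReal (Real.exp (-‖y‖) * ‖x - y‖ ^ s) ≤
        ENNReal.ofReal ((2:ℝ) ^ (-s) * ‖x‖ ^ s * Real.exp (-‖y‖)) +
        ENNReal.ofReal (Real.exp (-(‖x‖/4)) *
          (Real.exp (-(2⁻¹ * ‖y‖)) * ‖x - y‖ ^ s)) := by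
    intro y
    by_cases h : ‖y‖ ≤ ‖x‖/2
    · refine le_trans (ENNReal.ofReal_le_ofReal ?_) le_self_add
      have h1 : ‖x‖/2 ≤ ‖x - y‖ := by
        have := norm_sub_norm_le x y
        linarith
      have h2 : ‖x - y‖ ^ s ≤ (‖x‖/2) ^ s :=
        Real.rpow_le_rpow_of_nonpos (by linarith) h1 hs0.le
      have h3 : (‖x‖/2) ^ s = (2:ℝ) ^ (-s) * ‖x‖ ^ s := by
        rw [div_eq_mul_inv, Real.mul_rpow ht0.le (by norm_num),
          Real.inv_rpow (by norm_num), ← Real.rpow_neg (by norm_num), mul_comm]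
      calc Real.exp (-‖y‖) * ‖x - y‖ ^ s
          ≤ Real.exp (-‖y‖) * ((2:ℝ) ^ (-s) * ‖x‖ ^ s) := by
            apply mul_le_mul_of_nonneg_left _ (Real.exp_nonneg _)
            rw [← h3]; exact h2
        _ = (2:ℝ) ^ (-s) * ‖x‖ ^ s * Real.exp (-‖y‖) := by ring
    · refine le_trans (ENNReal.ofReal_le_ofReal ?_) le_add_self
      push_neg at h
      have h4 : Real.exp (-‖y‖) ≤ Real.exp (-(‖x‖/4)) * Real.exp (-(2⁻¹ * ‖y‖)) := by
        rw [← Real.exp_add]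
        apply Real.exp_le_exp.mpr
        linarith
      calc Real.exp (-‖y‖) * ‖x - y‖ ^ s
          ≤ (Real.exp (-(‖x‖/4)) * Real.exp (-(2⁻¹ * ‖y‖))) * ‖x - y‖ ^ s :=
            mul_le_mul_of_nonneg_right h4 (Real.rpow_nonneg (norm_nonneg _) _)
        _ = Real.exp (-(‖x‖/4)) * (Real.exp (-(2⁻¹ * ‖y‖)) * ‖x - y‖ ^ s) := by ring
  -- pointwise bound 2
  have hpt2 : ∀ y : EuclideanSpace ℝ (Fin d),
      ENNReal.ofReal (Real.exp (-(2⁻¹ * ‖y‖)) * ‖x - y‖ ^ s) ≤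
        (ball x 1).indicator (fun y => ENNReal.ofReal (‖x - y‖ ^ s)) y +
        ENNReal.ofReal (Real.exp (-(2⁻¹ * ‖y‖))) := by
    intro y
    by_cases h : y ∈ ball x 1
    · rw [indicator_of_mem h]
      refine le_trans (ENNReal.ofReal_le_ofReal ?_) le_self_add
      calc Real.exp (-(2⁻¹ * ‖y‖)) * ‖x - y‖ ^ s
          ≤ 1 * ‖x - y‖ ^ s := by
            apply mul_le_mul_of_nonneg_right _ (Real.rpow_nonneg (norm_nonneg _) _)
            rw [Real.exp_le_one_iff]
            have : (0:ℝ) ≤ 2⁻¹ * ‖y‖ := by positivity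
            linarith
        _ = ‖x - y‖ ^ s := one_mul _
    · rw [indicator_of_notMem h]
      refine le_trans (ENNReal.ofReal_le_ofReal ?_) le_add_self
      have h1 : 1 ≤ ‖x - y‖ := by
        simp only [mem_ball, dist_eq_norm, not_lt] at h
        rwa [norm_sub_rev]
      have h2 : ‖x - y‖ ^ s ≤ 1 := Real.rpow_le_one_of_one_le_of_nonpos h1 hs0.le
      calc Real.exp (-(2⁻¹ * ‖y‖)) * ‖x - y‖ ^ s
          ≤ Real.exp (-(2⁻¹ * ‖y‖)) * 1 :=
            mul_le_mul_of_nonneg_left h2 (Real.exp_nonneg _)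
        _ = Real.exp (-(2⁻¹ * ‖y‖)) := mul_one _
  -- translation invariance for the ball integral
  have htrans : ∫⁻ y : EuclideanSpace ℝ (Fin d) in ball x 1,
      ENNReal.ofReal (‖x - y‖ ^ s) = B := by
    have hmp := Measure.measurePreserving_sub_left
      (volume : Measure (EuclideanSpace ℝ (Fin d))) x
    have hemb := (Homeomorph.subLeft x).measurableEmbedding
    have hpre : (fun y : EuclideanSpace ℝ (Fin d) => x - y) ⁻¹' (ball 0 1) = ball x 1 := by
      ext y
      simp only [mem_preimage, mem_ball, dist_eq_norm, sub_zero, norm_sub_rev x y]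
    rw [hBdef, ← hmp.setLIntegral_comp_preimage_emb hemb
      (fun z => ENNReal.ofReal (‖z‖ ^ s)) (ball 0 1), hpre]
  -- exponential beaten by power
  have hexp4 : Real.exp (-(‖x‖/4)) ≤ K * ‖x‖ ^ s := by
    have h1 : ‖x‖ ^ (-s) ≤ K * Real.exp (‖x‖/4) := by
      have h2 : ‖x‖ ^ (-s) ≤ ‖x‖ ^ ((d:ℝ)) :=
        Real.rpow_le_rpow_of_exponent_le ht1 (by rw [hsdef]; linarith)
      have h4 : (‖x‖/4) ^ d / (d.factorial : ℝ) ≤ Real.exp (‖x‖/4) :=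
        Real.pow_div_factorial_le_exp _ (by positivity) d
      have hfac : (0:ℝ) < (d.factorial : ℝ) := by positivity
      calc ‖x‖ ^ (-s) ≤ ‖x‖ ^ ((d:ℝ)) := h2
        _ = ‖x‖ ^ d := Real.rpow_natCast _ d
        _ = 4 ^ d * (‖x‖/4) ^ d := by
            rw [div_pow]
            field_simp
        _ ≤ 4 ^ d * ((d.factorial : ℝ) * Real.exp (‖x‖/4)) := by
            apply mul_le_mul_of_nonneg_left _ (by positivity)
            rw [div_le_iff₀ hfac] at h4
            linarith [h4]
        _ = K * Real.exp (‖x‖/4) := by rw [hKdef]; ring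
    have hts : 0 < ‖x‖ ^ s := Real.rpow_pos_of_pos ht0 s
    rw [Real.exp_neg, inv_eq_one_div, div_le_iff₀ (Real.exp_pos _)]
    calc (1:ℝ) = ‖x‖ ^ (-s + s) := by
          rw [neg_add_cancel, Real.rpow_zero]
      _ = ‖x‖ ^ (-s) * ‖x‖ ^ s := Real.rpow_add ht0 _ _
      _ ≤ (K * Real.exp (‖x‖/4)) * ‖x‖ ^ s := mul_le_mul_of_nonneg_right h1 hts.le
      _ = K * ‖x‖ ^ s * Real.exp (‖x‖/4) := by ring
  -- main lintegral bound
  have hlin : ∫⁻ y : EuclideanSpace ℝ (Fin d),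
      ENNReal.ofReal (Real.exp (-‖y‖) * ‖x - y‖ ^ s) ≤
        ENNReal.ofReal (‖x‖ ^ s * Q.toReal) := by
    have hmeas1 : Measurable fun y : EuclideanSpace ℝ (Fin d) =>
        ENNReal.ofReal ((2:ℝ) ^ (-s) * ‖x‖ ^ s * Real.exp (-‖y‖)) := by fun_prop
    have hmeasInd : Measurable fun y : EuclideanSpace ℝ (Fin d) =>
        (ball x 1).indicator (fun y => ENNReal.ofReal (‖x - y‖ ^ s)) y := by
      apply Measurable.indicator _ measurableSet_ball
      exact (by fun_prop : Measurable fun y : EuclideanSpace ℝ (Fin d) => ‖x - y‖ ^ s).ennreal_ofReal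
    have hinner : ∫⁻ y : EuclideanSpace ℝ (Fin d),
        ENNReal.ofReal (Real.exp (-(2⁻¹ * ‖y‖)) * ‖x - y‖ ^ s) ≤ B + E2 := by
      calc ∫⁻ y : EuclideanSpace ℝ (Fin d),
            ENNReal.ofReal (Real.exp (-(2⁻¹ * ‖y‖)) * ‖x - y‖ ^ s)
          ≤ ∫⁻ y : EuclideanSpace ℝ (Fin d),
              ((ball x 1).indicator (fun y => ENNReal.ofReal (‖x - y‖ ^ s)) y +
               ENNReal.ofReal (Real.exp (-(2⁻¹ * ‖y‖)))) := lintegral_mono hpt2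
        _ = (∫⁻ y : EuclideanSpace ℝ (Fin d),
              (ball x 1).indicator (fun y => ENNReal.ofReal (‖x - y‖ ^ s)) y) + E2 :=
            lintegral_add_left hmeasInd _
        _ = B + E2 := by
            rw [lintegral_indicator measurableSet_ball, htrans]
    calc ∫⁻ y : EuclideanSpace ℝ (Fin d), ENNReal.ofReal (Real.exp (-‖y‖) * ‖x - y‖ ^ s)
        ≤ ∫⁻ y : EuclideanSpace ℝ (Fin d),
            (ENNReal.ofReal ((2:ℝ) ^ (-s) * ‖x‖ ^ s * Real.exp (-‖y‖)) +
             ENNReal.ofReal (Real.exp (-(‖x‖/4)) *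
               (Real.exp (-(2⁻¹ * ‖y‖)) * ‖x - y‖ ^ s))) := lintegral_mono hpt1
      _ = (∫⁻ y : EuclideanSpace ℝ (Fin d),
            ENNReal.ofReal ((2:ℝ) ^ (-s) * ‖x‖ ^ s * Real.exp (-‖y‖))) +
          ∫⁻ y : EuclideanSpace ℝ (Fin d),
            ENNReal.ofReal (Real.exp (-(‖x‖/4)) *
              (Real.exp (-(2⁻¹ * ‖y‖)) * ‖x - y‖ ^ s)) := lintegral_add_left hmeas1 _
      _ = ENNReal.ofReal ((2:ℝ) ^ (-s) * ‖x‖ ^ s) * E1 +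
          ENNReal.ofReal (Real.exp (-(‖x‖/4))) *
            ∫⁻ y : EuclideanSpace ℝ (Fin d),
              ENNReal.ofReal (Real.exp (-(2⁻¹ * ‖y‖)) * ‖x - y‖ ^ s) := by
          congr 1
          · simp_rw [ENNReal.ofReal_mul (by positivity :
              (0:ℝ) ≤ (2:ℝ) ^ (-s) * ‖x‖ ^ s)]
            rw [lintegral_const_mul' _ _ ENNReal.ofReal_ne_top]
          · simp_rw [ENNReal.ofReal_mul (Real.exp_nonneg (-(‖x‖/4)))]
            rw [lintegral_const_mul' _ _ ENNReal.ofReal_ne_top]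
      _ ≤ ENNReal.ofReal ((2:ℝ) ^ (-s) * ‖x‖ ^ s) * E1 +
          ENNReal.ofReal (K * ‖x‖ ^ s) * (B + E2) := by
          gcongr
      _ = ENNReal.ofReal (‖x‖ ^ s) * Q := by
          rw [hQdef, mul_comm ((2:ℝ) ^ (-s)) (‖x‖ ^ s), mul_comm K (‖x‖ ^ s),
            ENNReal.ofReal_mul (Real.rpow_nonneg ht0.le s),
            ENNReal.ofReal_mul (Real.rpow_nonneg ht0.le s)]
          ring
      _ = ENNReal.ofReal (‖x‖ ^ s * Q.toReal) := by
          rw [← ENNReal.ofReal_toReal hQ, ENNReal.ofReal_mul (Real.rpow_nonneg ht0.le s),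
            ENNReal.toReal_ofReal ENNReal.toReal_nonneg]
  -- conclude
  have hint : ∫ y : EuclideanSpace ℝ (Fin d), Real.exp (-‖y‖) * ‖x - y‖ ^ s ≤
      ‖x‖ ^ s * Q.toReal := by
    calc ∫ y : EuclideanSpace ℝ (Fin d), Real.exp (-‖y‖) * ‖x - y‖ ^ s
        ≤ ‖∫ y : EuclideanSpace ℝ (Fin d), Real.exp (-‖y‖) * ‖x - y‖ ^ s‖ :=
          Real.le_norm_self _
      _ ≤ (∫⁻ y : EuclideanSpace ℝ (Fin d),
            ENNReal.ofReal ‖Real.exp (-‖y‖) * ‖x - y‖ ^ s‖).toReal :=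
          norm_integral_le_lintegral_norm _
      _ = (∫⁻ y : EuclideanSpace ℝ (Fin d),
            ENNReal.ofReal (Real.exp (-‖y‖) * ‖x - y‖ ^ s)).toReal := by
          congr 1
          apply lintegral_congr
          intro y
          rw [Real.norm_of_nonneg
            (mul_nonneg (Real.exp_nonneg _) (Real.rpow_nonneg (norm_nonneg _) _))]
      _ ≤ ‖x‖ ^ s * Q.toReal :=
          ENNReal.toReal_le_of_le_ofReal
            (mul_nonneg (Real.rpow_nonneg ht0.le s) ENNReal.toReal_nonneg) hlin
  calc rieszPotential d α (fun y => Real.exp (-‖y‖)) x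
      = c * ∫ y : EuclideanSpace ℝ (Fin d), Real.exp (-‖y‖) * ‖x - y‖ ^ s := rfl
    _ ≤ c * (‖x‖ ^ s * Q.toReal) := mul_le_mul_of_nonneg_left hint hc0.le
    _ = (c * Q.toReal) * ‖x‖ ^ s := by ring
    _ ≤ (c * Q.toReal + 1) * ‖x‖ ^ s :=
        mul_le_mul_of_nonneg_right (by linarith) (Real.rpow_nonneg ht0.le s)
end
end
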